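/- arXiv:0710.5516 — 6 statements merged into one kernel-verified Lean document; each statement's English description precedes it below -/
import Mathlib

section
/- Let 𝔽 be a finite field with q elements, let n, r ∈ ℕ with r ≤ n, and let F be a homogeneous polynomial of degree n+1−r in n+2 variables over 𝔽 (defining a hypersurface X ⊂ P^{n+1} of degree n+1−r). Then the number of vectors x ∈ 𝔽^{n+2} with F(x) = 0 is at least q^{r+1}; equivalently, the number of 𝔽-rational points of X in P^{n+1} is at least |P^r(𝔽_q)| = q^r + q^{r−1} + ⋯ + q + 1. -/
open MvPolynomial

section Aux

variable {𝔽 : Type} [Field 𝔽] [Fintype 𝔽]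

/-- The linear polynomial attached to a linear functional on `Fin N → 𝔽`. -/
noncomputable def linPoly {N : ℕ} (ℓ : (Fin N → 𝔽) →ₗ[𝔽] 𝔽) : MvPolynomial (Fin N) 𝔽 :=
  ∑ j, (ℓ fun k => if j = k then 1 else 0) • X j

lemma eval_linPoly {N : ℕ} (ℓ : (Fin N → 𝔽) →ₗ[𝔽] 𝔽) (x : Fin N → 𝔽) :
    eval x (linPoly ℓ) = ℓ x := by
  rw [LinearMap.pi_apply_eq_sum_univ ℓ x, linPoly, map_sum]
  simp [smul_eval, mul_comm]

lemma totalDegree_linPoly {N : ℕ} (ℓ : (Fin N → 𝔽) →ₗ[𝔽] 𝔽) :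
    (linPoly ℓ).totalDegree ≤ 1 := by
  refine totalDegree_finsetSum_le fun j _ => ?_
  exact (totalDegree_smul_le _ _).trans (totalDegree_X j).le

lemma MvPolynomial.IsHomogeneous.eval_smul' {σ : Type*} [Fintype σ] {F : MvPolynomial σ 𝔽} {m : ℕ}
    (h : F.IsHomogeneous m) (c : 𝔽) (x : σ → 𝔽) :
    eval (c • x) F = c ^ m * eval x F := by
  classical
  rw [eval_eq', eval_eq', Finset.mul_sum]
  refine Finset.sum_congr rfl fun d hd => ?_
  have hdm : d.degree = m := by
    rw [Finsupp.degree_eq_weight_one]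
    exact h (mem_support_iff.mp hd)
  have hsum : ∑ i, d i = m := by
    rw [← hdm, Finsupp.degree]
    exact (Finset.sum_subset (Finset.subset_univ _)
      (fun i _ hi => Finsupp.notMem_support_iff.mp hi)).symm
  calc F.coeff d * ∏ i, (c • x) i ^ d i
      = F.coeff d * ((∏ i, c ^ d i) * ∏ i, x i ^ d i) := by
        simp [mul_pow, Finset.prod_mul_distrib]
    _ = c ^ m * (F.coeff d * ∏ i, x i ^ d i) := by
        rw [Finset.prod_pow_eq_pow_sum, hsum]; ring

/-- A cone (minus the origin) that meets every `(t+1)`-dimensional subspace in a nonzero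
point has at least `q^(N-t) - 1` elements. -/
lemma blocking_cone (t : ℕ) :
    ∀ (V : Type) [AddCommGroup V] [Module 𝔽 V] [Module.Finite 𝔽 V] (S : Set V),
    0 ∉ S → (∀ (c : 𝔽), c ≠ 0 → ∀ x ∈ S, c • x ∈ S) →
    (∀ W : Submodule 𝔽 V, Module.finrank 𝔽 W = t + 1 → ∃ x ∈ S, x ∈ W) →
    Fintype.card 𝔽 ^ (Module.finrank 𝔽 V - t) - 1 ≤ S.ncard := by
  induction t with
  | zero =>
    intro V _ _ _ S h0 hcone hblock
    haveI : Finite V := Module.finite_of_finite 𝔽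
    haveI : Fintype V := Fintype.ofFinite V
    have hall : ∀ x : V, x ≠ 0 → x ∈ S := by
      intro x hx
      obtain ⟨s, hsS, hsW⟩ := hblock (Submodule.span 𝔽 {x}) (finrank_span_singleton hx)
      rw [Submodule.mem_span_singleton] at hsW
      obtain ⟨c, rfl⟩ := hsW
      have hc : c ≠ 0 := by rintro rfl; rw [zero_smul] at hsS; exact h0 hsS
      have := hcone c⁻¹ (inv_ne_zero hc) _ hsS
      rwa [smul_smul, inv_mul_cancel₀ hc, one_smul] at this
    have hSeq : S = Set.univ \ {0} := by
      ext y
      constructor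
      · intro hy
        exact ⟨trivial, by rintro rfl; exact h0 hy⟩
      · intro hy
        exact hall y hy.2
    have hcard : Fintype.card V = Fintype.card 𝔽 ^ Module.finrank 𝔽 V :=
      Module.card_eq_pow_finrank (K := 𝔽)
    rw [hSeq, Set.ncard_diff (by simp), Set.ncard_univ, Set.ncard_singleton,
      Nat.card_eq_fintype_card, Nat.sub_zero, ← hcard]
  | succ t ih =>
    intro V _ _ _ S h0 hcone hblock
    haveI : Finite V := Module.finite_of_finite 𝔽
    haveI : Fintype V := Fintype.ofFinite V
    by_cases hall : ∀ x : V, x ≠ 0 → x ∈ S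
    · have hSeq : S = Set.univ \ {0} := by
        ext y
        exact ⟨fun hy => ⟨trivial, by rintro rfl; exact h0 hy⟩, fun hy => hall y hy.2⟩
      have hcard : Fintype.card V = Fintype.card 𝔽 ^ Module.finrank 𝔽 V :=
        Module.card_eq_pow_finrank (K := 𝔽)
      rw [hSeq, Set.ncard_diff (by simp), Set.ncard_univ, Set.ncard_singleton,
        Nat.card_eq_fintype_card, hcard]
      have : Fintype.card 𝔽 ^ (Module.finrank 𝔽 V - (t + 1)) ≤
          Fintype.card 𝔽 ^ Module.finrank 𝔽 V :=
        Nat.pow_le_pow_right Fintype.card_pos (Nat.sub_le _ _)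
      omega
    · push_neg at hall
      obtain ⟨P, hP0, hPS⟩ := hall
      set L : Submodule 𝔽 V := Submodule.span 𝔽 {P} with hL
      let f := L.mkQ
      have hker : LinearMap.ker f = L := Submodule.ker_mkQ L
      let S' : Set (V ⧸ L) := (f '' S) \ {0}
      have h0' : (0 : V ⧸ L) ∉ S' := fun h => h.2 rfl
      have hcone' : ∀ (c : 𝔽), c ≠ 0 → ∀ y ∈ S', c • y ∈ S' := by
        rintro c hc y ⟨⟨x, hxS, rfl⟩, hy0⟩
        refine ⟨⟨c • x, hcone c hc x hxS, map_smul f c x⟩, ?_⟩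
        simp only [Set.mem_singleton_iff] at hy0 ⊢
        exact smul_ne_zero hc hy0
      have hblock' : ∀ W' : Submodule 𝔽 (V ⧸ L), Module.finrank 𝔽 W' = t + 1 →
          ∃ y ∈ S', y ∈ W' := by
        intro W' hW'
        set W : Submodule 𝔽 V := W'.comap f with hW
        have hLW : L ≤ W := by
          intro x hx
          have hfx : f x = 0 := by rwa [← LinearMap.mem_ker, hker]
          simp [hW, Submodule.mem_comap, hfx]
        have hrange : LinearMap.range (f ∘ₗ W.subtype) = W' := by
          rw [LinearMap.range_comp, Submodule.range_subtype]
          exact Submodule.map_comap_eq_of_surjective (Submodule.mkQ_surjective L) W'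
        have hkercomp : LinearMap.ker (f ∘ₗ W.subtype) = Submodule.comap W.subtype L := by
          rw [LinearMap.ker_comp, hker]
        have hfrW : Module.finrank 𝔽 W = t + 2 := by
          have hrn := LinearMap.finrank_range_add_finrank_ker (f ∘ₗ W.subtype)
          rw [hrange, hkercomp] at hrn
          have h1 : Module.finrank 𝔽 (Submodule.comap W.subtype L) = 1 := by
            rw [(Submodule.comapSubtypeEquivOfLe hLW).finrank_eq]
            exact finrank_span_singleton hP0
          omega
        obtain ⟨x, hxS, hxW⟩ := hblock W (by omega)
        have hfx0 : f x ≠ 0 := by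
          intro hfx
          have hxL : x ∈ L := by rwa [← hker, LinearMap.mem_ker]
          rw [hL, Submodule.mem_span_singleton] at hxL
          obtain ⟨c, rfl⟩ := hxL
          have hc : c ≠ 0 := by rintro rfl; rw [zero_smul] at hxS; exact h0 hxS
          have := hcone c⁻¹ (inv_ne_zero hc) _ hxS
          rw [smul_smul, inv_mul_cancel₀ hc, one_smul] at this
          exact hPS this
        exact ⟨f x, ⟨⟨x, hxS, rfl⟩, hfx0⟩, hxW⟩
      have hQ : Module.finrank 𝔽 (V ⧸ L) + 1 = Module.finrank 𝔽 V := by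
        have := Submodule.finrank_quotient_add_finrank L
        rw [hL, finrank_span_singleton hP0] at this
        exact this
      have hbound := ih (V ⧸ L) S' h0' hcone' hblock'
      have hle : S'.ncard ≤ S.ncard :=
        le_trans (Set.ncard_le_ncard Set.diff_subset (Set.toFinite _))
          (Set.ncard_image_le (Set.toFinite _))
      have heq : Module.finrank 𝔽 (V ⧸ L) - t = Module.finrank 𝔽 V - (t + 1) := by omega
      rw [heq] at hbound
      omega

end Aux

/-- Exercise 2.3: a hypersurface of degree `n+1-r` in `ℙ^{n+1}` over `𝔽_q` has at
least `q^r + ⋯ + q + 1` rational points; equivalently its affine cone has at least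
`q^{r+1}` points. -/
theorem hypersurface_point_lower_bound
    (𝔽 : Type) [Field 𝔽] [Fintype 𝔽] (q : ℕ) (hq : Fintype.card 𝔽 = q)
    (n r : ℕ) (hr : r ≤ n)
    (F : MvPolynomial (Fin (n + 2)) 𝔽) (hF : F.IsHomogeneous (n + 1 - r)) :
    q ^ (r + 1) ≤ Nat.card {x : Fin (n + 2) → 𝔽 // eval x F = 0} := by
  classical
  subst hq
  set d := n + 1 - r with hd
  have hd1 : 1 ≤ d := by omega
  set Z : Set (Fin (n + 2) → 𝔽) := {x | eval x F = 0} with hZ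
  set S : Set (Fin (n + 2) → 𝔽) := Z \ {0} with hS
  have h0Z : (0 : Fin (n + 2) → 𝔽) ∈ Z := by
    have h := hF.eval_smul' (0 : 𝔽) 0
    rw [zero_smul, zero_pow (by omega), zero_mul] at h
    exact h
  have h0S : (0 : Fin (n + 2) → 𝔽) ∉ S := fun h => h.2 rfl
  have hcone : ∀ (c : 𝔽), c ≠ 0 → ∀ x ∈ S, c • x ∈ S := by
    intro c hc x hx
    refine ⟨?_, ?_⟩
    · show eval (c • x) F = 0
      rw [hF.eval_smul', show eval x F = 0 from hx.1, mul_zero]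
    · simp only [Set.mem_singleton_iff]
      exact smul_ne_zero hc (by simpa using hx.2)
  have hNfr : Module.finrank 𝔽 (Fin (n + 2) → 𝔽) = n + 2 := Module.finrank_fin_fun 𝔽
  have hblock : ∀ W : Submodule 𝔽 (Fin (n + 2) → 𝔽),
      Module.finrank 𝔽 W = d + 1 → ∃ x ∈ S, x ∈ W := by
    intro W hW
    have hquot : Module.finrank 𝔽 ((Fin (n + 2) → 𝔽) ⧸ W) = r := by
      have h2 := Submodule.finrank_quotient_add_finrank W
      rw [hW, hNfr] at h2
      omega
    let e : ((Fin (n + 2) → 𝔽) ⧸ W) ≃ₗ[𝔽] (Fin r → 𝔽) :=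
      LinearEquiv.ofFinrankEq _ _ (by rw [hquot, Module.finrank_fin_fun])
    let φ : (Fin (n + 2) → 𝔽) →ₗ[𝔽] (Fin r → 𝔽) := (e : _ →ₗ[𝔽] _) ∘ₗ W.mkQ
    have hkerφ : LinearMap.ker φ = W := by
      rw [LinearMap.ker_comp, LinearEquiv.ker, Submodule.comap_bot, Submodule.ker_mkQ]
    let f : Option (Fin r) → MvPolynomial (Fin (n + 2)) 𝔽 :=
      fun o => Option.elim o F fun i => linPoly ((LinearMap.proj i) ∘ₗ φ)
    have hFdeg : F.totalDegree ≤ d := by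
      rcases eq_or_ne F 0 with rfl | hne
      · simp
      · exact (hF.totalDegree hne).le
    have hdegs : ∑ o, (f o).totalDegree < Fintype.card (Fin (n + 2)) := by
      rw [Fintype.sum_option]
      have h1 : ∑ i : Fin r, (f (some i)).totalDegree ≤ ∑ i : Fin r, 1 :=
        Finset.sum_le_sum fun i _ => totalDegree_linPoly _
      simp only [Finset.sum_const, Finset.card_univ, Fintype.card_fin, smul_eq_mul,
        mul_one] at h1
      have h2 : (f none).totalDegree ≤ d := hFdeg
      rw [Fintype.card_fin]
      omega
    have hdvd := char_dvd_card_solutions_of_fintype_sum_lt (ringChar 𝔽) hdegs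
    have sol0 : ∀ o, eval (0 : Fin (n + 2) → 𝔽) (f o) = 0 := by
      rintro (_ | i)
      · exact h0Z
      · show eval 0 (linPoly _) = 0
        rw [eval_linPoly, map_zero]
    have hpos : 0 < Fintype.card {x : Fin (n + 2) → 𝔽 // ∀ o, eval x (f o) = 0} :=
      Fintype.card_pos_iff.mpr ⟨⟨0, sol0⟩⟩
    have hprime : (ringChar 𝔽).Prime := CharP.char_is_prime 𝔽 _
    have h2le : 2 ≤ Fintype.card {x : Fin (n + 2) → 𝔽 // ∀ o, eval x (f o) = 0} :=
      le_trans hprime.two_le (Nat.le_of_dvd hpos hdvd)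
    obtain ⟨y, hy⟩ := Fintype.exists_ne_of_one_lt_card
      (α := {x : Fin (n + 2) → 𝔽 // ∀ o, eval x (f o) = 0}) (by omega) ⟨0, sol0⟩
    have hyne : (y : Fin (n + 2) → 𝔽) ≠ 0 := fun h => hy (Subtype.ext h)
    refine ⟨y, ⟨show eval (y : Fin (n + 2) → 𝔽) F = 0 from y.2 none, by simpa using hyne⟩, ?_⟩
    rw [← hkerφ, LinearMap.mem_ker]
    funext i
    have hi := y.2 (some i)
    rw [show f (some i) = linPoly ((LinearMap.proj i) ∘ₗ φ) from rfl, eval_linPoly] at hi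
    exact hi
  have key := blocking_cone d (Fin (n + 2) → 𝔽) S h0S hcone hblock
  rw [hNfr, show n + 2 - d = r + 1 by omega] at key
  have hZins : insert (0 : Fin (n + 2) → 𝔽) S = Z := by
    rw [hS, Set.insert_diff_singleton, Set.insert_eq_of_mem h0Z]
  have hcard : Nat.card {x : Fin (n + 2) → 𝔽 // eval x F = 0} = Z.ncard :=
    Nat.card_coe_set_eq Z
  have hZS : Z.ncard = S.ncard + 1 := by
    rw [← hZins, Set.ncard_insert_of_notMem h0S (Set.toFinite _)]
  have hq1 : 1 ≤ Fintype.card 𝔽 ^ (r + 1) := Nat.one_le_pow _ _ Fintype.card_pos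
  omega
end

section
/- Let F = X₀³ + X₁³ + X₂³ + X₀²X₁ + X₁²X₂ + X₂²X₀ + X₀X₁X₂ + X₂²X₃ + X₂X₃² be the cubic form in 4 variables over 𝔽₂ = ZMod 2. Then: (a) the only nonzero vector x ∈ (ZMod 2)^4 with F(x) = 0 is (0,0,0,1), so the cubic surface (F = 0) ⊂ P^3 has exactly one 𝔽₂-rational point; and (b) for every field K of characteristic 2 and every x ∈ K^4, if all four partial derivatives of F (with coefficients mapped into K) vanish at x, then x = 0, so the surface (F = 0) is smooth. -/
open MvPolynomial

/-- The cubic form over `𝔽₂` of Proposition 2.1. -/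
noncomputable def SwDCubic : MvPolynomial (Fin 4) (ZMod 2) :=
  X 0 ^ 3 + X 1 ^ 3 + X 2 ^ 3 + X 0 ^ 2 * X 1 + X 1 ^ 2 * X 2 + X 2 ^ 2 * X 0 +
    X 0 * X 1 * X 2 + X 2 ^ 2 * X 3 + X 2 * X 3 ^ 2

/-- Proposition 2.1 (existence part): the cubic surface `(SwDCubic = 0) ⊂ ℙ³` over `𝔽₂`
is smooth and has exactly one `𝔽₂`-rational point, namely `(0:0:0:1)`. -/
theorem SwDCubic_unique_point_and_smooth :
    (∀ x : Fin 4 → ZMod 2, x ≠ 0 → (eval x SwDCubic = 0 ↔ x = ![0, 0, 0, 1])) ∧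
    (∀ (K : Type) [Field K] [CharP K 2], ∀ x : Fin 4 → K,
      (∀ i, eval x ((pderiv i SwDCubic).map (ZMod.castHom (dvd_refl 2) K)) = 0) →
      x = 0) := by
  constructor
  · have key : ∀ x : Fin 4 → ZMod 2, x ≠ 0 →
        ((x 0 ^ 3 + x 1 ^ 3 + x 2 ^ 3 + x 0 ^ 2 * x 1 + x 1 ^ 2 * x 2 + x 2 ^ 2 * x 0 +
          x 0 * x 1 * x 2 + x 2 ^ 2 * x 3 + x 2 * x 3 ^ 2 = 0) ↔ x = ![0, 0, 0, 1]) := by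
      decide
    intro x hx
    have he : eval x SwDCubic = x 0 ^ 3 + x 1 ^ 3 + x 2 ^ 3 + x 0 ^ 2 * x 1 + x 1 ^ 2 * x 2 +
        x 2 ^ 2 * x 0 + x 0 * x 1 * x 2 + x 2 ^ 2 * x 3 + x 2 * x 3 ^ 2 := by simp [SwDCubic]
    rw [he]
    exact key x hx
  · intro K _ _ x h
    have two : (2 : K) = 0 := by exact_mod_cast CharP.cast_eq_zero K 2
    have h0 := h 0
    have h1 := h 1
    have h2 := h 2
    have h3 := h 3
    simp only [SwDCubic, map_add, map_mul, map_pow] at h0 h1 h2 h3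
    simp [pderiv_mul, pderiv_pow, eval_map] at h0 h1 h2 h3
    have hx2 : x 2 = 0 := by
      have hs : x 2 ^ 2 = 0 := by linear_combination h3 - x 2 * x 3 * two
      exact pow_eq_zero_iff two_ne_zero |>.mp hs
    have hx0 : x 0 = 0 := by
      have hs : x 0 ^ 2 = 0 := by
        linear_combination h0 - (x 0 ^ 2 + x 0 * x 1) * two - (x 2 + x 1) * hx2
      exact pow_eq_zero_iff two_ne_zero |>.mp hs
    have hx1 : x 1 = 0 := by
      have hs : x 1 ^ 2 = 0 := by
        linear_combination h1 - (x 1 ^ 2 + x 1 * x 2) * two - (x 0 + x 2) * hx0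
      exact pow_eq_zero_iff two_ne_zero |>.mp hs
    have hx3 : x 3 = 0 := by
      have hs : x 3 ^ 2 = 0 := by
        linear_combination h2 - (x 0 * x 2 + x 3 * x 2) * two - 3 * x 2 * hx2 - (x 1 + x 0) * hx1
      exact pow_eq_zero_iff two_ne_zero |>.mp hs
    funext i
    fin_cases i <;> simpa
end

section
/- For every n ∈ ℕ there exists a homogeneous polynomial H of degree n+1 in n+2 variables over 𝔽₂ = ZMod 2 such that for every vector x ∈ (ZMod 2)^{n+2}, H(x) = 0 if and only if x = (0,…,0) or x = (1,…,1). Consequently, H defines a hypersurface of degree n+1 in P^{n+1} over 𝔽₂ containing exactly one 𝔽₂-rational point, namely (1:1:⋯:1). -/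
open MvPolynomial

section Aux

private lemma zmod2_pow_eq (a : ZMod 2) {k : ℕ} (hk : k ≠ 0) : a ^ k = a := by
  obtain ⟨j, rfl⟩ := Nat.exists_eq_succ_of_ne_zero hk
  induction j with
  | zero => simp
  | succ i ih => rw [pow_succ, ih (Nat.succ_ne_zero i)]; fin_cases a <;> rfl

private lemma zmod2_cases (a : ZMod 2) : a = 0 ∨ a = 1 := by fin_cases a; exact Or.inl rfl; exact Or.inr rfl

end Aux

/-- v. Bothmer's construction: for every `n` there is a homogeneous polynomial of
degree `n+1` in `n+2` variables over `𝔽₂` vanishing on `𝔽₂^{n+2}` exactly at the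
all-zeros and all-ones vectors; it defines a degree `n+1` hypersurface in `ℙ^{n+1}`
with exactly one `𝔽₂`-point, namely `(1:1:⋯:1)`. -/
theorem bothmer_hypersurface (n : ℕ) :
    ∃ H : MvPolynomial (Fin (n + 2)) (ZMod 2),
      H.IsHomogeneous (n + 1) ∧
      ∀ x : Fin (n + 2) → ZMod 2, (eval x H = 0 ↔ (x = 0 ∨ x = fun _ => 1)) := by
  classical
  -- the collection of proper nonempty subsets of the index set
  set T : Finset (Finset (Fin (n + 2))) :=
    (Finset.univ : Finset (Fin (n + 2))).powerset.filter
      (fun S => S ≠ ∅ ∧ S ≠ Finset.univ) with hT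
  -- exponent vector attached to a subset `S`
  set e : Finset (Fin (n + 2)) → (Fin (n + 2) →₀ ℕ) := fun S =>
    if h : S.Nonempty then
      Finsupp.equivFunOnFinite.symm
        (fun i => if i ∈ S then (if i = S.min' h then n + 2 - S.card else 1) else 0)
    else 0 with he
  refine ⟨∑ S ∈ T, monomial (e S) 1, ?_, ?_⟩
  · -- facts about membership in `T`
    apply MvPolynomial.IsHomogeneous.sum
    intro S hS
    rw [hT, Finset.mem_filter] at hS
    obtain ⟨-, hne, hproper⟩ := hS
    have hSne : S.Nonempty := Finset.nonempty_iff_ne_empty.2 hne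
    have hcardle : S.card ≤ n + 1 := by
      have h1 : S.card < (Finset.univ : Finset (Fin (n + 2))).card :=
        Finset.card_lt_card (Finset.ssubset_univ_iff.2 hproper)
      have h2 : S.card < n + 2 := by simpa using h1
      omega
    have hcardpos : 1 ≤ S.card := Finset.card_pos.2 hSne
    apply isHomogeneous_monomial
    -- compute the degree of `e S`
    have heS : e S = Finsupp.equivFunOnFinite.symm
        (fun i => if i ∈ S then (if i = S.min' hSne then n + 2 - S.card else 1) else 0) := by
      rw [he]; simp [dif_pos hSne]
    rw [heS]
    rw [Finsupp.degree_apply]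
    rw [Finset.sum_subset (Finset.subset_univ _)
      (by intro x _ hx; simpa using Finsupp.notMem_support_iff.mp hx)]
    have : ∀ i : Fin (n + 2),
        (Finsupp.equivFunOnFinite.symm
          (fun i => if i ∈ S then (if i = S.min' hSne then n + 2 - S.card else 1) else 0)) i
        = if i ∈ S then (if i = S.min' hSne then n + 2 - S.card else 1) else 0 := fun i => rfl
    simp only [this]
    rw [Finset.sum_ite_mem, Finset.univ_inter]
    have hmin : S.min' hSne ∈ S := S.min'_mem hSne
    rw [← Finset.add_sum_erase _ _ hmin, if_pos rfl]
    rw [Finset.sum_congr rfl (fun i hi => if_neg (Finset.ne_of_mem_erase hi))]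
    rw [Finset.sum_const, Finset.card_erase_of_mem hmin]
    simp only [smul_eq_mul, mul_one]
    omega
  · intro x
    -- evaluate the sum of monomials
    have heval : eval x (∑ S ∈ T, monomial (e S) 1) = ∑ S ∈ T, ∏ i ∈ S, x i := by
      rw [map_sum]
      refine Finset.sum_congr rfl fun S hS => ?_
      rw [hT, Finset.mem_filter] at hS
      obtain ⟨-, hne, hproper⟩ := hS
      have hSne : S.Nonempty := Finset.nonempty_iff_ne_empty.2 hne
      have hcardle : S.card ≤ n + 1 := by
        have h1 : S.card < (Finset.univ : Finset (Fin (n + 2))).card :=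
          Finset.card_lt_card (Finset.ssubset_univ_iff.2 hproper)
        have h2 : S.card < n + 2 := by simpa using h1
        omega
      have heS : e S = Finsupp.equivFunOnFinite.symm
          (fun i => if i ∈ S then (if i = S.min' hSne then n + 2 - S.card else 1) else 0) := by
        rw [he]; simp [dif_pos hSne]
      rw [eval_monomial, one_mul, heS,
        Finsupp.prod_fintype _ _ (fun i => pow_zero (x i))]
      have hfun : ∀ i : Fin (n + 2),
          (Finsupp.equivFunOnFinite.symm
            (fun i => if i ∈ S then (if i = S.min' hSne then n + 2 - S.card else 1) else 0)) i
          = if i ∈ S then (if i = S.min' hSne then n + 2 - S.card else 1) else 0 := fun i => rfl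
      simp only [hfun]
      rw [← Finset.prod_subset (Finset.subset_univ S)
        (by intro i _ hi; rw [if_neg hi, pow_zero])]
      refine Finset.prod_congr rfl fun i hi => ?_
      rw [if_pos hi]
      apply zmod2_pow_eq
      split <;> omega
    rw [heval]
    -- key identity: sum over all subsets equals a product
    have hprod : ∑ S ∈ (Finset.univ : Finset (Fin (n + 2))).powerset, ∏ i ∈ S, x i
        = ∏ i : Fin (n + 2), (x i + 1) := by
      rw [Finset.prod_add]
      exact Finset.sum_congr rfl fun S _ => by simp
    have hsplit : ∑ S ∈ (Finset.univ : Finset (Fin (n + 2))).powerset, ∏ i ∈ S, x i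
        = (∑ S ∈ T, ∏ i ∈ S, x i) + (1 + ∏ i : Fin (n + 2), x i) := by
      rw [hT, ← Finset.sum_filter_add_sum_filter_not
        ((Finset.univ : Finset (Fin (n + 2))).powerset)
        (fun S => S ≠ ∅ ∧ S ≠ Finset.univ)]
      congr 1
      have hfilter : ((Finset.univ : Finset (Fin (n + 2))).powerset.filter
          (fun S => ¬(S ≠ ∅ ∧ S ≠ Finset.univ)))
          = {∅, (Finset.univ : Finset (Fin (n + 2)))} := by
        ext S
        simp only [Finset.mem_filter, Finset.mem_powerset, Finset.mem_insert,
          Finset.mem_singleton]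
        constructor
        · rintro ⟨-, h⟩; tauto
        · rintro (rfl | rfl) <;> simp
      rw [hfilter, Finset.sum_pair (by
        intro h
        exact (Finset.univ_nonempty (α := Fin (n + 2))).ne_empty h.symm)]
      simp
    have key : ∑ S ∈ T, ∏ i ∈ S, x i
        = ∏ i : Fin (n + 2), (x i + 1) + 1 + ∏ i : Fin (n + 2), x i := by
      have h2 : (1 : ZMod 2) + 1 = 0 := by decide
      have htwo : (2 : ZMod 2) = 0 := by decide
      have := hsplit.symm.trans hprod
      -- in ZMod 2 subtraction is addition
      linear_combination this - (1 + ∏ i : Fin (n + 2), x i) * htwo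
    rw [key]
    constructor
    · intro h0
      by_contra hcon
      push_neg at hcon
      obtain ⟨hx0, hx1⟩ := hcon
      -- there is a coordinate equal to 1 and one equal to 0
      have h1 : ∃ i, x i = 1 := by
        by_contra h
        push_neg at h
        exact hx0 (funext fun i => (zmod2_cases (x i)).resolve_right (h i))
      have h0' : ∃ j, x j = 0 := by
        by_contra h
        push_neg at h
        exact hx1 (funext fun i => (zmod2_cases (x i)).resolve_left (h i))
      obtain ⟨i, hi⟩ := h1
      obtain ⟨j, hj⟩ := h0'
      rw [Finset.prod_eq_zero (Finset.mem_univ i) (by rw [hi]; decide),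
        Finset.prod_eq_zero (Finset.mem_univ j) hj] at h0
      simp at h0
    · rintro (rfl | rfl)
      · have hz : ∏ i : Fin (n + 2), (0 : Fin (n + 2) → ZMod 2) i = 0 :=
          Finset.prod_eq_zero (Finset.mem_univ 0) rfl
        have ho : ∏ i : Fin (n + 2), ((0 : Fin (n + 2) → ZMod 2) i + 1) = 1 := by simp
        rw [hz, ho]; decide
      · have hz : ∏ i : Fin (n + 2), ((fun _ => (1 : ZMod 2)) i + 1) = 0 :=
          Finset.prod_eq_zero (Finset.mem_univ 0) (by show (1 : ZMod 2) + 1 = 0; decide)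
        have ho : ∏ i : Fin (n + 2), (fun _ => (1 : ZMod 2)) i = 1 := by simp
        rw [hz, ho]; decide
end

section
/- Let K be a field, N ∈ ℕ, and F a homogeneous polynomial of degree 3 in N variables over K. Let p, s ∈ K^N satisfy F(p) = 0 and F(s) = 0. Then there exist c, d ∈ K such that for all α, β ∈ K one has F(α·p + β·s) = α·β·(c·α + d·β); in particular, the third intersection point of the line through p and s with the cubic is defined over K: F(d·p − c·s) = 0. -/
open MvPolynomial

/-- The third intersection point map: if `F` is a cubic form vanishing at `p` and `s`,
then the restriction of `F` to the line through `p` and `s` is `αβ(cα + dβ)` for some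
`c, d ∈ K`, and the third intersection point `d·p − c·s` lies on the cubic. -/
theorem third_intersection_point
    (K : Type) [Field K] (N : ℕ)
    (F : MvPolynomial (Fin N) K) (hF : F.IsHomogeneous 3)
    (p s : Fin N → K) (hp : eval p F = 0) (hs : eval s F = 0) :
    ∃ c d : K,
      (∀ α β : K, eval (α • p + β • s) F = α * β * (c * α + d * β)) ∧
      eval (d • p - c • s) F = 0 := by
  classical
  set g : Fin N → MvPolynomial (Fin 2) K := fun i => C (p i) * X 0 + C (s i) * X 1 with hg
  set Q : MvPolynomial (Fin 2) K := aeval g F with hQdef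
  have hgh : ∀ i, (g i).IsHomogeneous 1 := fun i =>
    ((isHomogeneous_C _ (p i)).mul (isHomogeneous_X _ 0)).add
      ((isHomogeneous_C _ (s i)).mul (isHomogeneous_X _ 1))
  have hQhom : Q.IsHomogeneous 3 := by exact hF.aeval g hgh
  -- evaluation of Q computes F on the line
  have key : ∀ α β : K, eval (α • p + β • s) F = eval ![α, β] Q := by
    intro α β
    rw [hQdef, aeval_def, eval₂_comp_left (eval ![α, β])]
    rw [show (eval ![α, β]).comp (algebraMap K (MvPolynomial (Fin 2) K)) = RingHom.id K by
      ext x; simp [algebraMap_eq]]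
    have hcomp : (⇑(eval ![α, β]) ∘ g) = (α • p + β • s) := by
      funext i
      simp [hg]
      ring
    rw [hcomp]
    rfl
  -- the four exponent vectors
  set e : ℕ → ℕ → (Fin 2 →₀ ℕ) := fun a b => Finsupp.single 0 a + Finsupp.single 1 b with he
  have he0 : ∀ a b, e a b 0 = a := by intro a b; simp [he, Finsupp.single_apply]
  have he1 : ∀ a b, e a b 1 = b := by intro a b; simp [he, Finsupp.single_apply]
  have hrepr : ∀ d : Fin 2 →₀ ℕ, d = e (d 0) (d 1) := by
    intro d
    ext i
    fin_cases i <;> simp [he, Finsupp.single_apply]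
  have hdeg : ∀ d : Fin 2 →₀ ℕ, Finsupp.degree d = d 0 + d 1 := by
    intro d
    rw [Finsupp.degree_apply, Finset.sum_subset (Finset.subset_univ d.support)
      (by intro x _ hx; simpa using Finsupp.notMem_support_iff.mp hx), Fin.sum_univ_two]
  have hsupp : Q.support ⊆ {e 3 0, e 2 1, e 1 2, e 0 3} := by
    intro d hd
    have hcd : coeff d Q ≠ 0 := MvPolynomial.mem_support_iff.mp hd
    have hdd : d 0 + d 1 = 3 := by
      rw [← hdeg d]
      by_contra h; exact hcd (hQhom.coeff_eq_zero h)
    have hcases : (d 0 = 3 ∧ d 1 = 0) ∨ (d 0 = 2 ∧ d 1 = 1) ∨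
        (d 0 = 1 ∧ d 1 = 2) ∨ (d 0 = 0 ∧ d 1 = 3) := by omega
    simp only [Finset.mem_insert, Finset.mem_singleton]
    rcases hcases with ⟨h1, h2⟩ | ⟨h1, h2⟩ | ⟨h1, h2⟩ | ⟨h1, h2⟩ <;>
      [exact Or.inl (by rw [hrepr d, h1, h2]);
       exact Or.inr (Or.inl (by rw [hrepr d, h1, h2]));
       exact Or.inr (Or.inr (Or.inl (by rw [hrepr d, h1, h2])));
       exact Or.inr (Or.inr (Or.inr (by rw [hrepr d, h1, h2])))]
  -- distinctness
  have hne : ∀ a b a' b' : ℕ, a ≠ a' → e a b ≠ e a' b' := by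
    intro a b a' b' h hcontra
    exact h (by rw [← he0 a b, hcontra, he0])
  -- the evaluation formula
  have hf : ∀ α β : K,
      eval ![α, β] Q = coeff (e 3 0) Q * α ^ 3 + coeff (e 2 1) Q * (α ^ 2 * β)
        + coeff (e 1 2) Q * (α * β ^ 2) + coeff (e 0 3) Q * β ^ 3 := by
    intro α β
    rw [eval_eq' ![α, β] Q,
      Finset.sum_subset hsupp (fun x _ hx => by
        simp [MvPolynomial.notMem_support_iff.mp hx])]
    rw [show ({e 3 0, e 2 1, e 1 2, e 0 3} : Finset (Fin 2 →₀ ℕ))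
        = insert (e 3 0) (insert (e 2 1) (insert (e 1 2) {e 0 3})) from rfl]
    rw [Finset.sum_insert (by
        simp only [Finset.mem_insert, Finset.mem_singleton]
        push_neg
        exact ⟨hne 3 0 2 1 (by omega), hne 3 0 1 2 (by omega), hne 3 0 0 3 (by omega)⟩),
      Finset.sum_insert (by
        simp only [Finset.mem_insert, Finset.mem_singleton]
        push_neg
        exact ⟨hne 2 1 1 2 (by omega), hne 2 1 0 3 (by omega)⟩),
      Finset.sum_insert (by simpa using hne 1 2 0 3 (by omega)),
      Finset.sum_singleton]
    simp only [Fin.prod_univ_two, he0, he1]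
    simp only [Matrix.cons_val_zero, Matrix.cons_val_one, Matrix.head_cons]
    ring
  -- vanishing of extreme coefficients
  have ha : coeff (e 3 0) Q = 0 := by
    have h : eval ((1:K) • p + (0:K) • s) F = 0 := by
      rw [show (1:K) • p + (0:K) • s = p by simp]; exact hp
    rw [key 1 0, hf 1 0] at h
    simpa using h
  have hb : coeff (e 0 3) Q = 0 := by
    have h : eval ((0:K) • p + (1:K) • s) F = 0 := by
      rw [show (0:K) • p + (1:K) • s = s by simp]; exact hs
    rw [key 0 1, hf 0 1] at h
    simpa using h
  refine ⟨coeff (e 2 1) Q, coeff (e 1 2) Q, fun α β => ?_, ?_⟩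
  · rw [key α β, hf α β, ha, hb]; ring
  · rw [sub_eq_add_neg, ← neg_smul, key _ _, hf, ha, hb]; ring
end

section
/- Let 𝔽₁₆ be the field with 16 elements (GaloisField 2 4) and let F = X₀³ + X₁³ + X₂³ + X₃³ be the Fermat cubic form in 4 variables over 𝔽₁₆. Then every 𝔽₁₆-point of the Fermat cubic surface lies on a line contained in the surface: for every nonzero x ∈ 𝔽₁₆^4 with F(x) = 0, there exist linearly independent vectors u, v ∈ 𝔽₁₆^4 such that F(α·u + β·v) = 0 for all α, β ∈ 𝔽₁₆, and x = α·u + β·v for some α, β ∈ 𝔽₁₆. -/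
open MvPolynomial

section Aux

variable {K : Type*} [Field K]

/-- Key consequence of `a⁵ = b⁵ = 1` for distinct `a, b` in char 2. -/
lemma fermat_key (h2 : (2:K) = 0) (a b : K) (hab : a ≠ b)
    (ha : a^5 = 1) (hb : b^5 = 1) :
    (a+b)^4 + a*b*(a+b)^2 + (a*b)^2 = 0 ∧ a*b*(a+b)^3 = 1 := by
  have hI : ∀ x y : K,
      x^5 = ((x+y)^4 + x*y*(x+y)^2 + (x*y)^2)*x + x*y*(x+y)^3 := by
    intro x y
    linear_combination (-(3*x^4*y + 6*x^3*y^2 + 4*x^2*y^3 + x*y^4)) * h2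
  have h1 := hI a b
  have h1' := hI b a
  rw [ha] at h1
  rw [hb] at h1'
  have hA : ((a+b)^4 + a*b*(a+b)^2 + (a*b)^2) * (a - b) = 0 := by
    linear_combination h1' - h1
  have hab' : a - b ≠ 0 := sub_ne_zero.mpr hab
  have hA0 : (a+b)^4 + a*b*(a+b)^2 + (a*b)^2 = 0 :=
    (mul_eq_zero.1 hA).resolve_right hab'
  refine ⟨hA0, ?_⟩
  linear_combination -h1 - a * hA0

/-- No three fifth roots of unity sum to zero in char 2. -/
lemma fermat_lemA (h2 : (2:K) = 0) (a b c : K)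
    (ha : a^5 = 1) (hb : b^5 = 1) (hc : c^5 = 1) (h : a + b + c = 0) : False := by
  have hab : a ≠ b := by
    intro h'
    rw [h'] at h
    have hc0 : c = 0 := by linear_combination h - b * h2
    rw [hc0] at hc
    simp at hc
  obtain ⟨hA, hB⟩ := fermat_key h2 a b hab ha hb
  have hcs : c = a + b := by linear_combination h - (a+b) * h2
  rw [hcs] at hc
  have hp : a*b = (a+b)^2 := by linear_combination (a+b)^2 * hB - a*b*hc
  rw [hp] at hA
  have hs4 : (a+b)^4 = 0 := by linear_combination hA - (a+b)^4 * h2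
  have hs : a + b = 0 := by
    exact pow_eq_zero_iff (n := 4) (by norm_num) |>.1 hs4
  rw [hs] at hc
  simp at hc

/-- Four fifth roots of unity summing to zero: `a` must pair with `c` or `d`. -/
lemma fermat_core (h2 : (2:K) = 0) (a b c d : K) (hab : a ≠ b) (hcd : c ≠ d)
    (ha : a^5 = 1) (hb : b^5 = 1) (hc : c^5 = 1) (hd : d^5 = 1)
    (h : a + b + c + d = 0) : a = c ∨ a = d := by
  have hscd : c + d = a + b := by linear_combination h - (a+b) * h2
  obtain ⟨hA1, hB1⟩ := fermat_key h2 a b hab ha hb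
  obtain ⟨hA2, hB2⟩ := fermat_key h2 c d hcd hc hd
  rw [hscd] at hB2
  have hs : a + b ≠ 0 := fun h0 => hab (by linear_combination h0 - b * h2)
  have hpq : (a*b - c*d) * (a+b)^3 = 0 := by linear_combination hB1 - hB2
  have hpq' : a*b = c*d := by
    rcases mul_eq_zero.1 hpq with h' | h'
    · linear_combination h'
    · exact absurd (pow_eq_zero_iff (n := 3) (by norm_num) |>.1 h') hs
  have hfac : (a + c) * (a + d) = 0 := by
    linear_combination a * hscd - hpq' + (a^2 + a*b) * h2
  rcases mul_eq_zero.1 hfac with h' | h'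
  · exact Or.inl (by linear_combination h' - c * h2)
  · exact Or.inr (by linear_combination h' - d * h2)

/-- The pairing lemma: four elements satisfying `y⁶ = y` with zero sum pair up. -/
lemma fermat_pairing (h2 : (2:K) = 0) (a b c d : K)
    (ha : a^6 = a) (hb : b^6 = b) (hc : c^6 = c) (hd : d^6 = d)
    (h : a + b + c + d = 0) :
    (a = b ∧ c = d) ∨ (a = c ∧ b = d) ∨ (a = d ∧ b = c) := by
  by_cases h01 : a = b
  · refine Or.inl ⟨h01, ?_⟩
    rw [h01] at h
    linear_combination h - (b + d) * h2
  by_cases h23 : c = d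
  · refine Or.inl ⟨?_, h23⟩
    rw [h23] at h
    linear_combination h - (b + d) * h2
  by_cases h02 : a = c
  · refine Or.inr (Or.inl ⟨h02, ?_⟩)
    rw [h02] at h
    linear_combination h - (c + d) * h2
  by_cases h13 : b = d
  · exact absurd (by rw [h13] at h; linear_combination h - (c + d) * h2) h02
  by_cases h03 : a = d
  · refine Or.inr (Or.inr ⟨h03, ?_⟩)
    rw [h03] at h
    linear_combination h - (c + d) * h2
  by_cases h12 : b = c
  · exact absurd (by rw [h12] at h; linear_combination h - (c + d) * h2) h03
  -- all distinct: derive a contradiction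
  exfalso
  have fifth : ∀ y : K, y^6 = y → y = 0 ∨ y^5 = 1 := by
    intro y hy
    rcases mul_eq_zero.1 (show y * (y^5 - 1) = 0 by linear_combination hy) with h' | h'
    · exact Or.inl h'
    · exact Or.inr (by linear_combination h')
  rcases fifth a ha with ha0 | ha5
  · rcases fifth b hb with hb0 | hb5
    · exact h01 (ha0.trans hb0.symm)
    rcases fifth c hc with hc0 | hc5
    · exact h02 (ha0.trans hc0.symm)
    rcases fifth d hd with hd0 | hd5
    · exact h03 (ha0.trans hd0.symm)
    exact fermat_lemA h2 b c d hb5 hc5 hd5 (by rw [ha0] at h; linear_combination h)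
  rcases fifth b hb with hb0 | hb5
  · rcases fifth c hc with hc0 | hc5
    · exact h12 (hb0.trans hc0.symm)
    rcases fifth d hd with hd0 | hd5
    · exact h13 (hb0.trans hd0.symm)
    exact fermat_lemA h2 a c d ha5 hc5 hd5 (by rw [hb0] at h; linear_combination h)
  rcases fifth c hc with hc0 | hc5
  · rcases fifth d hd with hd0 | hd5
    · exact h23 (hc0.trans hd0.symm)
    exact fermat_lemA h2 a b d ha5 hb5 hd5 (by rw [hc0] at h; linear_combination h)
  rcases fifth d hd with hd0 | hd5
  · exact fermat_lemA h2 a b c ha5 hb5 hc5 (by rw [hd0] at h; linear_combination h)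
  rcases fermat_core h2 a b c d h01 h23 ha5 hb5 hc5 hd5 h with h' | h'
  · exact h02 h'
  · exact h03 h'

/-- Extract a cube root of unity from equality of cubes. -/
lemma fermat_root (a b : K) (h : a^3 = b^3) : ∃ ζ : K, ζ^3 = 1 ∧ a = ζ * b := by
  by_cases hb : b = 0
  · refine ⟨1, one_pow 3, ?_⟩
    rw [hb] at h ⊢
    have : a = 0 := by
      have : a^3 = 0 := by rw [h]; ring
      exact pow_eq_zero_iff (n := 3) (by norm_num) |>.1 this
    rw [this]; ring
  · refine ⟨a / b, ?_, ?_⟩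
    · field_simp [h]; exact h
    · field_simp

end Aux


/-- Over `𝔽₁₆`, every point of the Fermat cubic surface `x₀³+x₁³+x₂³+x₃³ = 0`
lies on a line contained in the surface. -/
theorem fermat_cubic_points_on_lines
    (F : MvPolynomial (Fin 4) (GaloisField 2 4))
    (hF : F = X 0 ^ 3 + X 1 ^ 3 + X 2 ^ 3 + X 3 ^ 3)
    (x : Fin 4 → GaloisField 2 4) (hx0 : x ≠ 0) (hx : eval x F = 0) :
    ∃ u v : Fin 4 → GaloisField 2 4,
      LinearIndependent (GaloisField 2 4) ![u, v] ∧
      (∀ α β : GaloisField 2 4, eval (α • u + β • v) F = 0) ∧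
      ∃ α β : GaloisField 2 4, x = α • u + β • v := by
  have h2 : (2 : GaloisField 2 4) = 0 := by
    have := CharP.cast_eq_zero (GaloisField 2 4) 2
    exact_mod_cast this
  have h16 : ∀ t : GaloisField 2 4, t ^ 16 = t := by
    haveI : Fintype (GaloisField 2 4) := Fintype.ofFinite _
    intro t
    have h := FiniteField.pow_card t
    rw [← Nat.card_eq_fintype_card, GaloisField.card 2 4 (by norm_num)] at h
    norm_num at h
    exact h
  have h6 : ∀ t : GaloisField 2 4, (t^3)^6 = t^3 := by
    intro t
    calc (t^3)^6 = t^16 * t^2 := by ring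
    _ = t * t^2 := by rw [h16]
    _ = t^3 := by ring
  rw [hF] at hx
  simp only [map_add, map_pow, eval_X] at hx
  rcases fermat_pairing h2 _ _ _ _ (h6 (x 0)) (h6 (x 1)) (h6 (x 2)) (h6 (x 3)) hx with
    ⟨e1, e2⟩ | ⟨e1, e2⟩ | ⟨e1, e2⟩
  · obtain ⟨ζ, hζ, hζx⟩ := fermat_root _ _ e1
    obtain ⟨η, hη, hηx⟩ := fermat_root _ _ e2
    refine ⟨![ζ, 1, 0, 0], ![0, 0, η, 1], ?_, ?_, x 1, x 3, ?_⟩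
    · rw [LinearIndependent.pair_iff]
      intro s t hst
      have h1 := congrFun hst 1
      have h3 := congrFun hst 3
      simp at h1 h3
      exact ⟨h1, h3⟩
    · intro α β
      rw [hF]
      simp only [map_add, map_pow, eval_X, Pi.add_apply, Pi.smul_apply, smul_eq_mul]
      simp only [Matrix.cons_val_zero, Matrix.cons_val_one, Matrix.head_cons,
        Matrix.cons_val_two, Matrix.tail_cons, Matrix.cons_val_three]
      linear_combination α^3 * hζ + β^3 * hη + (α^3 + β^3) * h2
    · funext i
      fin_cases i <;> simp <;>
        first
          | linear_combination hζx
          | linear_combination hηx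
  · obtain ⟨ζ, hζ, hζx⟩ := fermat_root _ _ e1
    obtain ⟨η, hη, hηx⟩ := fermat_root _ _ e2
    refine ⟨![ζ, 0, 1, 0], ![0, η, 0, 1], ?_, ?_, x 2, x 3, ?_⟩
    · rw [LinearIndependent.pair_iff]
      intro s t hst
      have h1 := congrFun hst 2
      have h3 := congrFun hst 3
      simp at h1 h3
      exact ⟨h1, h3⟩
    · intro α β
      rw [hF]
      simp only [map_add, map_pow, eval_X, Pi.add_apply, Pi.smul_apply, smul_eq_mul]
      simp only [Matrix.cons_val_zero, Matrix.cons_val_one, Matrix.head_cons,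
        Matrix.cons_val_two, Matrix.tail_cons, Matrix.cons_val_three]
      linear_combination α^3 * hζ + β^3 * hη + (α^3 + β^3) * h2
    · funext i
      fin_cases i <;> simp <;>
        first
          | linear_combination hζx
          | linear_combination hηx
  · obtain ⟨ζ, hζ, hζx⟩ := fermat_root _ _ e1
    obtain ⟨η, hη, hηx⟩ := fermat_root _ _ e2
    refine ⟨![ζ, 0, 0, 1], ![0, η, 1, 0], ?_, ?_, x 3, x 2, ?_⟩
    · rw [LinearIndependent.pair_iff]
      intro s t hst
      have h1 := congrFun hst 3
      have h3 := congrFun hst 2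
      simp at h1 h3
      exact ⟨h1, h3⟩
    · intro α β
      rw [hF]
      simp only [map_add, map_pow, eval_X, Pi.add_apply, Pi.smul_apply, smul_eq_mul]
      simp only [Matrix.cons_val_zero, Matrix.cons_val_one, Matrix.head_cons,
        Matrix.cons_val_two, Matrix.tail_cons, Matrix.cons_val_three]
      linear_combination α^3 * hζ + β^3 * hη + (α^3 + β^3) * h2
    · funext i
      fin_cases i <;> simp <;>
        first
          | linear_combination hζx
          | linear_combination hηx
end

section
/- Let K be a field of characteristic 2, let n ≥ 1, let m be odd, and let F = Σ_{i≠j} X_i^{2^n} X_j (sum over ordered pairs i ≠ j) in the polynomial ring over K in the m+1 variables X₀, …, X_m. Then the hypersurface (F = 0) ⊂ P^m is smooth: for every x ∈ K^{m+1}, if F(x) = 0 and all partial derivatives ∂F/∂X_k vanish at x, then x = 0. -/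
open MvPolynomial

/-- Exercise 9.5 (second part): in characteristic 2 and for `m` odd, the form
`F = Σ_{i ≠ j} X_i^{2^n} X_j` defines a smooth hypersurface in `ℙ^m`. -/
theorem sum_offDiag_smooth
    (K : Type) [Field K] [CharP K 2] (n : ℕ) (hn : 1 ≤ n)
    (m : ℕ) (hm : Odd m)
    (F : MvPolynomial (Fin (m + 1)) K)
    (hF : F = ∑ ij ∈ Finset.univ.offDiag, X ij.1 ^ 2 ^ n * X ij.2)
    (x : Fin (m + 1) → K)
    (hx : eval x F = 0) (hdx : ∀ k, eval x (pderiv k F) = 0) :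
    x = 0 := by
  have h2 : (2 : K) = 0 := by exact_mod_cast CharP.cast_eq_zero K 2
  have key : ∀ k, ∑ i : Fin (m+1), (if i = k then 0 else x i ^ 2 ^ n) = 0 := by
    intro k
    have hp : ((2 ^ n : ℕ) : K) = 0 := by
      push_cast
      rw [h2, zero_pow (by omega)]
    have h := hdx k
    rw [hF] at h
    have hod : (Finset.univ : Finset (Fin (m+1))).offDiag
        = (Finset.univ ×ˢ Finset.univ).filter (fun a : Fin (m+1) × Fin (m+1) => a.1 ≠ a.2) := by
      ext a; simp [Finset.mem_offDiag]
    simp only [map_sum, pderiv_mul, pderiv_pow, pderiv_X, map_add, map_mul, eval_add,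
      eval_mul, eval_pow, eval_X, Nat.cast_ofNat, hod, Finset.sum_filter,
      Finset.sum_product, Pi.single_apply, apply_ite (MvPolynomial.pderiv k), apply_ite (MvPolynomial.eval x), map_zero] at h
    simp only [map_natCast, hp, map_one, zero_mul, zero_add, mul_ite, mul_one, mul_zero, ne_eq] at h
    simp only [ite_self, zero_mul, zero_add] at h
    have hrw : ∀ i j : Fin (m+1), (if ¬i = j then (if j = k then x i ^ 2 ^ n else 0) else 0)
        = if j = k then (if i = k then 0 else x i ^ 2 ^ n) else 0 := by
      intro i j; split_ifs <;> simp_all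
    simp only [hrw, Finset.sum_ite_eq' Finset.univ k, Finset.mem_univ, if_true] at h
    exact h
  set S := ∑ i : Fin (m+1), x i ^ 2 ^ n with hS
  have hk : ∀ k, x k ^ 2 ^ n = S := by
    intro k
    have hsplit : S = (∑ i : Fin (m+1), if i = k then (0:K) else x i ^ 2 ^ n)
        + ∑ i : Fin (m+1), (if i = k then x i ^ 2 ^ n else 0) := by
      rw [← Finset.sum_add_distrib]
      refine Finset.sum_congr rfl fun i _ => ?_
      split_ifs <;> ring
    rw [key k, zero_add, Finset.sum_ite_eq' Finset.univ k] at hsplit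
    simpa using hsplit.symm
  have hcast : ((m + 1 : ℕ) : K) = 0 := by
    rw [CharP.cast_eq_zero_iff K 2]
    obtain ⟨t, ht⟩ := hm
    omega
  have hS0 : S = 0 := by
    have : S = ((m + 1 : ℕ) : K) * S := by
      calc S = ∑ _k : Fin (m+1), S := by
              rw [hS]; exact Finset.sum_congr rfl fun k _ => hk k
        _ = ((m + 1 : ℕ) : K) * S := by
              rw [Finset.sum_const, Finset.card_univ, Fintype.card_fin, nsmul_eq_mul]
    rw [hcast, zero_mul] at this
    exact this
  funext k
  have := hk k
  rw [hS0] at this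
  have : x k = 0 := pow_eq_zero_iff (by positivity) |>.mp this
  simpa using this
end
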